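/- Let (Λ, dx) be a measure space with 0 < |Λ| < ∞, N ≥ 2, and P an essentially bounded symmetric probability density on Λ^N. For n ∈ ℕ set Q_n = max{P, 1/n} and P_n = Q_n / ‖Q_n‖_{L^1(Λ^N)}. Then each P_n is a symmetric probability density satisfying: there exists α_n > 0 such that for every x_N ∈ Λ, P_n(·, x_N) ≥ α_n ρ_n^{(N−1)}(·) a.e. on Λ^{N−1} (where ρ_n^{(N−1)} is the (N−1)-marginal of P_n); and P_n → P in L^∞(Λ^N; d^N x) (and hence in L^1). -/

import Mathlib

open MeasureTheory Filter
open scoped NNReal ENNReal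

lemma measurePreserving_finAppend {Λ : Type*} [MeasurableSpace Λ] (μ : Measure Λ) [SigmaFinite μ]
    (k m N : ℕ) (h : N = k + m) :
    MeasurePreserving
      (fun p : (Fin k → Λ) × (Fin m → Λ) => fun i : Fin N => Fin.append p.1 p.2 (Fin.cast h i))
      ((Measure.pi fun _ : Fin k => μ).prod (Measure.pi fun _ : Fin m => μ))
      (Measure.pi fun _ : Fin N => μ) := by
  have h1 := measurePreserving_sumPiEquivProdPi_symm (fun _ : Fin k ⊕ Fin m => μ)
  have h2 := measurePreserving_piCongrLeft (fun _ : Fin (k + m) => μ) finSumFinEquiv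
  have h3 := measurePreserving_piCongrLeft (fun _ : Fin N => μ) (finCongr h.symm)
  have hcomp := h3.comp (h2.comp h1)
  convert hcomp using 1
  funext p
  funext i
  have hconst : ∀ {ι ι' : Type} (e : ι ≃ ι') (f : ι → Λ) (j : ι'),
      Equiv.piCongrLeft (fun _ => Λ) e f j = f (e.symm j) := by
    intro ι ι' e f j
    rw [Equiv.piCongrLeft_apply_eq_cast]
    exact cast_eq_iff_heq.mpr HEq.rfl
  show Fin.append p.1 p.2 (Fin.cast h i) = _
  simp only [Function.comp_apply, MeasurableEquiv.coe_piCongrLeft,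
    MeasurableEquiv.coe_sumPiEquivProdPi_symm]
  rw [hconst]
  have hsymm : (finCongr h.symm).symm i = Fin.cast h i := rfl
  rw [hsymm]
  generalize Fin.cast h i = j
  refine Fin.addCases (fun l => ?_) (fun l => ?_) j
  · rw [Fin.append_left, ← finSumFinEquiv_apply_left l]
    exact (Equiv.piCongrLeft_sumInl (fun _ => Λ) finSumFinEquiv p.1 p.2 l).symm
  · rw [Fin.append_right, ← finSumFinEquiv_apply_right l]
    exact (Equiv.piCongrLeft_sumInr (fun _ => Λ) finSumFinEquiv p.1 p.2 l).symm

/-- The `k`-variable marginal `ρ^{(k)}` of a density `P` on `Λ^N`. -/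
noncomputable def marg {Λ : Type*} [MeasurableSpace Λ] (μ : Measure Λ) (N k : ℕ)
    (hk : k ≤ N) (P : (Fin N → Λ) → ℝ) : (Fin k → Λ) → ℝ :=
  fun y => ∫ z : Fin (N - k) → Λ,
    P (fun i => Fin.append y z (Fin.cast (by omega) i)) ∂(Measure.pi fun _ => μ)

/-- **Theorem 4.** Let `0 < |Λ| < ∞` and `P` an essentially bounded symmetric
probability density on `Λ^N`.  With `Qₙ = max{P, 1/n}` and `Pₙ = Qₙ / ‖Qₙ‖₁`, each `Pₙ`
(`n ≥ 1`) is a symmetric probability density satisfying the lower-bound condition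
`Pₙ(·,x_N) ≥ αₙ ρₙ^{(N−1)}` a.e. for some `αₙ > 0` and all `x_N ∈ Λ`, and `Pₙ → P` in
`L^∞(Λ^N; d^N x)` and in `L^1(Λ^N; d^N x)`. -/
theorem perturbed_density_satisfies_condition
    {Λ : Type*} [MeasurableSpace Λ] (μ : Measure Λ)
    (hμ0 : μ Set.univ ≠ 0) (hμfin : μ Set.univ ≠ ⊤)
    (N : ℕ) (hN : 2 ≤ N) (P : (Fin N → Λ) → ℝ) (hPmeas : Measurable P)
    (hPnn : ∀ x, 0 ≤ P x)
    (hPsym : ∀ σ : Equiv.Perm (Fin N), ∀ x, P (x ∘ σ) = P x)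
    (hPint : ∫ x, P x ∂(Measure.pi fun _ : Fin N => μ) = 1)
    (hPbdd : MemLp P ⊤ (Measure.pi fun _ : Fin N => μ))
    (Pn : ℕ → (Fin N → Λ) → ℝ)
    (hPn : ∀ n x, Pn n x =
      max (P x) ((n : ℝ)⁻¹) /
        ∫ y, max (P y) ((n : ℝ)⁻¹) ∂(Measure.pi fun _ : Fin N => μ)) :
    (∀ n : ℕ, 1 ≤ n →
      (∀ x, 0 ≤ Pn n x) ∧
      (∀ σ : Equiv.Perm (Fin N), ∀ x, Pn n (x ∘ σ) = Pn n x) ∧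
      (∫ x, Pn n x ∂(Measure.pi fun _ : Fin N => μ) = 1) ∧
      ∃ α : ℝ, 0 < α ∧ ∀ a : Λ,
        ∀ᵐ y ∂(Measure.pi fun _ : Fin (N - 1) => μ),
          α * marg μ N (N - 1) (by omega) (Pn n) y ≤
            Pn n (fun i : Fin N =>
              (Fin.snoc y a : Fin (N - 1 + 1) → Λ)
                (Fin.cast (show N = N - 1 + 1 by omega) i))) ∧
    Tendsto (fun n => eLpNorm (fun x => Pn n x - P x) ⊤ (Measure.pi fun _ : Fin N => μ))
      atTop (nhds 0) ∧
    Tendsto (fun n => eLpNorm (fun x => Pn n x - P x) 1 (Measure.pi fun _ : Fin N => μ))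
      atTop (nhds 0) := by
  have hμFin : IsFiniteMeasure μ := ⟨hμfin.lt_top⟩
  set ν := (Measure.pi fun _ : Fin N => μ) with hνdef
  have hPL1 : Integrable P ν := memLp_one_iff_integrable.mp (hPbdd.mono_exponent le_top)
  set C := (eLpNormEssSup P ν).toReal with hCdef
  have hCtop : eLpNormEssSup P ν ≠ ⊤ := by
    have h2 := hPbdd.2
    rw [eLpNorm_exponent_top] at h2
    exact h2.ne
  have hC0 : 0 ≤ C := ENNReal.toReal_nonneg
  have hPC : ∀ᵐ x ∂ν, P x ≤ C := by
    filter_upwards [ae_le_eLpNormEssSup (f := P) (μ := ν)] with x hx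
    have := ENNReal.toReal_mono hCtop hx
    simpa [abs_of_nonneg (hPnn x)] using this.trans_eq rfl
  set V := (ν Set.univ).toReal with hVdef
  have hV0 : 0 ≤ V := ENNReal.toReal_nonneg
  -- facts about Iₙ = ∫ max (P x) (n⁻¹)
  have key : ∀ n : ℕ, 1 ≤ n →
      Integrable (fun x => max (P x) ((n : ℝ)⁻¹)) ν ∧
      1 ≤ (∫ x, max (P x) ((n : ℝ)⁻¹) ∂ν) ∧
      (∫ x, max (P x) ((n : ℝ)⁻¹) ∂ν) ≤ 1 + (n : ℝ)⁻¹ * V := by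
    intro n hn
    have hc0 : (0 : ℝ) ≤ (n : ℝ)⁻¹ := by positivity
    have hInt : Integrable (fun x => max (P x) ((n : ℝ)⁻¹)) ν := by
      have h := hPL1.sup (integrable_const ((n : ℝ)⁻¹))
      exact h.congr (Eventually.of_forall fun x => rfl)
    refine ⟨hInt, ?_, ?_⟩
    · calc (1 : ℝ) = ∫ x, P x ∂ν := hPint.symm
        _ ≤ _ := integral_mono hPL1 hInt fun x => le_max_left _ _
    · have : (∫ x, max (P x) ((n : ℝ)⁻¹) ∂ν) ≤ ∫ x, P x + (n : ℝ)⁻¹ ∂ν := by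
        refine integral_mono hInt (hPL1.add (integrable_const _)) fun x => ?_
        exact max_le (le_add_of_nonneg_right hc0) (le_add_of_nonneg_left (hPnn x))
      rw [integral_add hPL1 (integrable_const _), hPint, integral_const, smul_eq_mul] at this
      calc (∫ x, max (P x) ((n : ℝ)⁻¹) ∂ν) ≤ 1 + V * (n : ℝ)⁻¹ := this
        _ = 1 + (n : ℝ)⁻¹ * V := by ring
  -- the uniform a.e. bound for the difference
  set K := 1 + V * C with hKdef
  have hbound : ∀ n : ℕ, 1 ≤ n → ∀ᵐ x ∂ν, ‖Pn n x - P x‖ ≤ K / n := by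
    intro n hn
    obtain ⟨hInt, hI1, hI2⟩ := key n hn
    set I := (∫ x, max (P x) ((n : ℝ)⁻¹) ∂ν) with hIdef
    have hn0 : (0 : ℝ) < n := by exact_mod_cast hn
    have hc0 : (0 : ℝ) ≤ (n : ℝ)⁻¹ := by positivity
    have hIpos : (0 : ℝ) < I := lt_of_lt_of_le one_pos hI1
    filter_upwards [hPC] with x hx
    rw [hPn, Real.norm_eq_abs, abs_le]
    have hfn1 : P x ≤ max (P x) ((n : ℝ)⁻¹) := le_max_left _ _
    have hfn2 : max (P x) ((n : ℝ)⁻¹) ≤ P x + (n : ℝ)⁻¹ :=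
      max_le (le_add_of_nonneg_right hc0) (le_add_of_nonneg_left (hPnn x))
    have hfn0 : 0 ≤ max (P x) ((n : ℝ)⁻¹) := le_trans (hPnn x) hfn1
    have hdivle : max (P x) ((n : ℝ)⁻¹) / I ≤ max (P x) ((n : ℝ)⁻¹) := div_le_self hfn0 hI1
    have hdivge : P x / I ≤ max (P x) ((n : ℝ)⁻¹) / I := by gcongr
    have hPx0 := hPnn x
    have hKc : K / n = K * (n : ℝ)⁻¹ := by ring
    constructor
    · -- lower bound
      have h1 : P x - P x / I = P x * (I - 1) / I := by field_simp
      have h2 : P x * (I - 1) / I ≤ C * (I - 1) := by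
        rw [div_le_iff₀ hIpos]
        nlinarith [mul_le_mul_of_nonneg_right hx (by linarith : (0:ℝ) ≤ I - 1),
          mul_nonneg (mul_nonneg hC0 (by linarith : (0:ℝ) ≤ I - 1)) (by linarith : (0:ℝ) ≤ I - 1)]
      have h3 : C * (I - 1) ≤ C * ((n : ℝ)⁻¹ * V) := by
        apply mul_le_mul_of_nonneg_left _ hC0
        linarith
      have hVC : 0 ≤ V * C * (n : ℝ)⁻¹ := by positivity
      rw [hKc]
      nlinarith [hdivge]
    · rw [hKc]
      have hc1 : 0 ≤ V * C * (n : ℝ)⁻¹ := by positivity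
      nlinarith [hdivle]
  have hν0 : ν Set.univ ≠ ⊤ := measure_ne_top ν _
  have htendK : Tendsto (fun n : ℕ => ENNReal.ofReal (K / n)) atTop (nhds 0) := by
    have := ENNReal.tendsto_ofReal (tendsto_const_div_atTop_nhds_zero_nat K)
    simpa using this
  refine ⟨?_, ?_, ?_⟩
  · -- per-n properties
    intro n hn
    obtain ⟨hInt, hI1, hI2⟩ := key n hn
    set I := (∫ x, max (P x) ((n : ℝ)⁻¹) ∂ν) with hIdef
    have hn0 : (0 : ℝ) < n := by exact_mod_cast hn
    have hc0 : (0 : ℝ) < (n : ℝ)⁻¹ := by positivity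
    have hIpos : (0 : ℝ) < I := lt_of_lt_of_le one_pos hI1
    refine ⟨?_, ?_, ?_, ?_⟩
    · intro x
      rw [hPn]
      have : 0 ≤ max (P x) ((n : ℝ)⁻¹) := le_trans (hPnn x) (le_max_left _ _)
      positivity
    · intro σ x
      rw [hPn, hPn, hPsym σ x]
    · simp only [hPn]
      rw [integral_div]
      exact div_self hIpos.ne'
    · -- the lower bound condition
      set k := N - 1 with hkdef
      set m := N - (N - 1) with hmdef
      have hkm : N = k + m := by omega
      have hg := measurePreserving_finAppend μ k m N hkm
      have hae2 : ∀ᵐ p ∂((Measure.pi fun _ : Fin k => μ).prod (Measure.pi fun _ : Fin m => μ)),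
          P (fun i : Fin N => Fin.append p.1 p.2 (Fin.cast hkm i)) ≤ C :=
        hg.quasiMeasurePreserving.ae hPC
      have hae3 := Measure.ae_ae_of_ae_prod hae2
      set Vm := ((Measure.pi fun _ : Fin m => μ) Set.univ).toReal with hVmdef
      have hVm0 : 0 < Vm := by
        rw [hVmdef, Measure.pi_univ, Finset.prod_const]
        refine ENNReal.toReal_pos (pow_ne_zero _ hμ0) (ENNReal.pow_ne_top hμfin)
      have hCc : (0 : ℝ) < C + (n : ℝ)⁻¹ := by positivity
      refine ⟨(n : ℝ)⁻¹ / ((C + (n : ℝ)⁻¹) * Vm), div_pos hc0 (mul_pos hCc hVm0), ?_⟩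
      intro a
      filter_upwards [hae3] with y hy
      -- bound the marginal
      have hmarg : marg μ N (N - 1) (by omega) (Pn n) y ≤ (C + (n : ℝ)⁻¹) / I * Vm := by
        have hb : ∀ᵐ z ∂(Measure.pi fun _ : Fin m => μ),
            ‖Pn n (fun i : Fin N => Fin.append y z (Fin.cast hkm i))‖ ≤ (C + (n : ℝ)⁻¹) / I := by
          filter_upwards [hy] with z hz
          rw [hPn, Real.norm_eq_abs]
          have h0 : 0 ≤ max (P (fun i : Fin N => Fin.append y z (Fin.cast hkm i))) ((n : ℝ)⁻¹) :=
            le_trans (le_of_lt hc0) (le_max_right _ _)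
          rw [abs_of_nonneg (by positivity)]
          exact div_le_div_of_nonneg_right (max_le (by linarith) (by linarith)) hIpos.le
        have := norm_integral_le_of_norm_le_const hb
        rw [Real.norm_eq_abs] at this
        refine le_trans (le_abs_self _) (le_trans ?_ this)
        exact le_of_eq rfl
      have hrhs : (n : ℝ)⁻¹ / I ≤ Pn n (fun i : Fin N =>
          (Fin.snoc y a : Fin (N - 1 + 1) → Λ) (Fin.cast (show N = N - 1 + 1 by omega) i)) := by
        rw [hPn]
        exact div_le_div_of_nonneg_right (le_max_right _ _) hIpos.le
      have hprod : (n : ℝ)⁻¹ / ((C + (n : ℝ)⁻¹) * Vm) * ((C + (n : ℝ)⁻¹) / I * Vm)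
          = (n : ℝ)⁻¹ / I := by
        field_simp
      calc (n : ℝ)⁻¹ / ((C + (n : ℝ)⁻¹) * Vm) * marg μ N (N - 1) (by omega) (Pn n) y
          ≤ (n : ℝ)⁻¹ / ((C + (n : ℝ)⁻¹) * Vm) * ((C + (n : ℝ)⁻¹) / I * Vm) :=
            mul_le_mul_of_nonneg_left hmarg (le_of_lt (div_pos hc0 (mul_pos hCc hVm0)))
        _ = (n : ℝ)⁻¹ / I := hprod
        _ ≤ _ := hrhs
  · -- L^∞ convergence
    refine tendsto_of_tendsto_of_tendsto_of_le_of_le' tendsto_const_nhds htendK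
      (Eventually.of_forall fun n => zero_le) ?_
    filter_upwards [eventually_ge_atTop 1] with n hn
    rw [eLpNorm_exponent_top]
    exact eLpNormEssSup_le_of_ae_bound (hbound n hn)
  · -- L¹ convergence
    have htend : Tendsto (fun n : ℕ => ν Set.univ * ENNReal.ofReal (K / n)) atTop (nhds 0) := by
      have := ENNReal.Tendsto.const_mul htendK (Or.inr hν0)
      simpa using this
    refine tendsto_of_tendsto_of_tendsto_of_le_of_le' tendsto_const_nhds htend
      (Eventually.of_forall fun n => zero_le) ?_
    filter_upwards [eventually_ge_atTop 1] with n hn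
    have := eLpNorm_le_of_ae_bound (p := 1) (hbound n hn)
    simpa using this
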